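/- For all real x, y with x > 0 and y > 0, the complementary error function satisfies |erfc(x + iy)| < e^{y² − x²}/(x√π) · √(1 + y²/x²). -/

import Mathlib

open Complex MeasureTheory

/-- The error function, `erf z = (2/√π) ∫₀^z e^{-u²} du`, integrated along the
segment from `0` to `z` (the integrand is entire, so the path is immaterial). -/
noncomputable def erf (z : ℂ) : ℂ :=
  (2 / Real.sqrt Real.pi : ℝ) * ∫ t in (0:ℝ)..1, z * Complex.exp (-((t : ℂ) * z) ^ 2)

/-- The complementary error function, `erfc z = (2/√π) ∫_z^∞ e^{-u²} du`,
integrated along the horizontal ray from `z` to `+∞`. -/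
noncomputable def erfc (z : ℂ) : ℂ :=
  (2 / Real.sqrt Real.pi : ℝ) * ∫ t in Set.Ioi (0:ℝ), Complex.exp (-(z + (t : ℂ)) ^ 2)

open Set in
private lemma aux_deriv (x t : ℝ) :
    HasDerivAt (fun s : ℝ => -Real.exp (-(x+s)^2)/2) ((x+t) * Real.exp (-(x+t)^2)) t := by
  have h0 : HasDerivAt (fun s : ℝ => x+s) 1 t := (hasDerivAt_id t).const_add x
  have h1 : HasDerivAt (fun s : ℝ => -(x+s)^2) (-(2*(x+t))) t := by
    simpa using (h0.fun_pow 2).fun_neg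
  have := (h1.exp.fun_neg).div_const 2
  exact this.congr_deriv (by ring)

private lemma aux_tendsto (x : ℝ) :
    Filter.Tendsto (fun s : ℝ => -Real.exp (-(x+s)^2)/2) Filter.atTop (nhds 0) := by
  have h0 : Filter.Tendsto (fun s : ℝ => x + s) Filter.atTop Filter.atTop :=
    Filter.tendsto_atTop_add_const_left _ x Filter.tendsto_id
  have h : Filter.Tendsto (fun s : ℝ => -(x+s)^2) Filter.atTop Filter.atBot :=
    Filter.tendsto_neg_atBot_iff.mpr ((Filter.tendsto_pow_atTop two_ne_zero).comp h0)
  have := (Real.tendsto_exp_atBot.comp h).neg.div_const 2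
  simpa using this

open Set in
private lemma aux_int (x : ℝ) (hx : 0 ≤ x) :
    IntegrableOn (fun t : ℝ => (x+t) * Real.exp (-(x+t)^2)) (Ioi 0) := by
  apply integrableOn_Ioi_deriv_of_nonneg' (fun t _ => aux_deriv x t)
  · intro t ht
    have ht' := ht.out
    have : (0:ℝ) ≤ x + t := by linarith
    positivity
  · exact aux_tendsto x

open Set in
private lemma aux_val (x : ℝ) (hx : 0 ≤ x) :
    ∫ t in Ioi (0:ℝ), (x+t) * Real.exp (-(x+t)^2) = Real.exp (-x^2)/2 := by
  rw [integral_Ioi_of_hasDerivAt_of_tendsto' (fun t _ => aux_deriv x t) (aux_int x hx)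
    (aux_tendsto x)]
  simp
  ring

private lemma aux_norm (x y t : ℝ) :
    ‖Complex.exp (-(((x:ℂ) + y*Complex.I) + (t : ℂ)) ^ 2)‖ = Real.exp (y^2 - (x+t)^2) := by
  rw [Complex.norm_exp]
  congr 1
  simp [pow_two, Complex.add_re, Complex.add_im, Complex.mul_re]

theorem strand_bound (x y : ℝ) (hx : 0 < x) (hy : 0 < y) :
    ‖erfc (x + y * Complex.I)‖ <
      Real.exp (y ^ 2 - x ^ 2) / (x * Real.sqrt Real.pi) * Real.sqrt (1 + y ^ 2 / x ^ 2) := by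
  have hπ : 0 < Real.sqrt Real.pi := Real.sqrt_pos.mpr Real.pi_pos
  set z : ℂ := (x:ℂ) + y * Complex.I with hz
  -- integrability of the Gaussian and of the dominating function
  have hg : Integrable (fun t : ℝ => Real.exp (-(x+t)^2)) := by
    have h := integrable_exp_neg_mul_sq (one_pos (α := ℝ))
    have h2 := h.comp_add_left x
    simpa using h2
  have hf : IntegrableOn (fun t : ℝ => Real.exp (y^2 - (x+t)^2)) (Set.Ioi 0) := by
    have : (fun t : ℝ => Real.exp (y^2 - (x+t)^2))
        = fun t : ℝ => Real.exp (y^2) * Real.exp (-(x+t)^2) := by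
      funext t; rw [← Real.exp_add]; ring_nf
    rw [this]
    exact (hg.const_mul _).integrableOn
  have hdom : IntegrableOn
      (fun t : ℝ => (Real.exp (y^2) / x) * ((x+t) * Real.exp (-(x+t)^2))) (Set.Ioi 0) :=
    (aux_int x hx.le).const_mul _
  -- pointwise bound on Ioi 0
  have hptwise : ∀ t ∈ Set.Ioi (0:ℝ),
      Real.exp (y^2 - (x+t)^2) ≤ (Real.exp (y^2) / x) * ((x+t) * Real.exp (-(x+t)^2)) := by
    intro t ht
    have ht' : 0 < t := ht
    have h1 : Real.exp (y^2 - (x+t)^2) = Real.exp (y^2) * Real.exp (-(x+t)^2) := by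
      rw [← Real.exp_add]; ring_nf
    rw [h1, div_mul_eq_mul_div, le_div_iff₀ hx]
    have key : 0 ≤ (Real.exp (y^2) * Real.exp (-(x+t)^2)) * t :=
      mul_nonneg (mul_pos (Real.exp_pos _) (Real.exp_pos _)).le ht'.le
    nlinarith [key]
  -- the integral bound
  have hIbound : (∫ t in Set.Ioi (0:ℝ), Real.exp (y^2 - (x+t)^2))
      ≤ Real.exp (y^2) / x * (Real.exp (-x^2)/2) := by
    calc (∫ t in Set.Ioi (0:ℝ), Real.exp (y^2 - (x+t)^2))
        ≤ ∫ t in Set.Ioi (0:ℝ), (Real.exp (y^2) / x) * ((x+t) * Real.exp (-(x+t)^2)) :=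
          setIntegral_mono_on hf hdom measurableSet_Ioi hptwise
      _ = Real.exp (y^2) / x * (Real.exp (-x^2)/2) := by
          rw [integral_const_mul, aux_val x hx.le]
  -- norm bound on erfc
  have habs : ‖erfc z‖ ≤ Real.exp (y^2 - x^2) / (x * Real.sqrt Real.pi) := by
    rw [erfc]
    rw [norm_mul, Complex.norm_real, Real.norm_eq_abs]
    have h1 : ‖∫ t in Set.Ioi (0:ℝ), Complex.exp (-(z + (t:ℂ))^2)‖
        ≤ ∫ t in Set.Ioi (0:ℝ), Real.exp (y^2 - (x+t)^2) := by
      calc ‖∫ t in Set.Ioi (0:ℝ), Complex.exp (-(z + (t:ℂ))^2)‖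
          = ‖∫ t in Set.Ioi (0:ℝ), Complex.exp (-(z + (t:ℂ))^2)‖ :=
            rfl
        _ ≤ ∫ t in Set.Ioi (0:ℝ), ‖Complex.exp (-(z + (t:ℂ))^2)‖ :=
            norm_integral_le_integral_norm _
        _ = ∫ t in Set.Ioi (0:ℝ), Real.exp (y^2 - (x+t)^2) := by
            apply setIntegral_congr_fun measurableSet_Ioi
            intro t _
            exact aux_norm x y t
    have h2 := h1.trans hIbound
    have hc : |2 / Real.sqrt Real.pi| = 2 / Real.sqrt Real.pi := by
      rw [_root_.abs_of_nonneg]; positivity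
    rw [hc]
    calc (2 / Real.sqrt Real.pi) * ‖∫ t in Set.Ioi (0:ℝ),
            Complex.exp (-(z + (t:ℂ))^2)‖
        ≤ (2 / Real.sqrt Real.pi) * (Real.exp (y^2) / x * (Real.exp (-x^2)/2)) := by
          apply mul_le_mul_of_nonneg_left h2; positivity
      _ = Real.exp (y^2 - x^2) / (x * Real.sqrt Real.pi) := by
          rw [Real.exp_sub, Real.exp_neg]
          field_simp
  -- conclude with the strict factor √(1 + y²/x²) > 1
  have hfac : 1 < Real.sqrt (1 + y^2/x^2) := by
    have hpos : 0 < y^2/x^2 := by positivity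
    have h01 : (1:ℝ)^2 < 1 + y^2/x^2 := by nlinarith
    exact (Real.lt_sqrt zero_le_one).mpr h01
  have hB : 0 < Real.exp (y^2 - x^2) / (x * Real.sqrt Real.pi) := by positivity
  calc ‖erfc z‖ ≤ Real.exp (y^2 - x^2) / (x * Real.sqrt Real.pi) := habs
    _ = Real.exp (y^2 - x^2) / (x * Real.sqrt Real.pi) * 1 := by ring
    _ < Real.exp (y^2 - x^2) / (x * Real.sqrt Real.pi) * Real.sqrt (1 + y^2/x^2) := by
        exact mul_lt_mul_of_pos_left hfac hB
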